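/- Let 𝔤 = 𝔰𝔩₂(ℂ) with standard basis h, e, f. Cherednik's trigonometric solution ρ(z) = (cos z/(2 sin z))·h⊗h + (1/ sin z)·(e⊗f + f⊗e) + (sin z)·f⊗f satisfies the classical Yang–Baxter equation with one spectral parameter: for all x, y ∈ ℂ with sin x ≠ 0, sin y ≠ 0 and sin(x+y) ≠ 0, one has [ρ(x), ρ(x+y)]^{12,13} + [ρ(x+y), ρ(y)]^{13,23} + [ρ(x), ρ(y)]^{12,23} = 0. -/

import Mathlib

open scoped TensorProduct
open Matrix

noncomputable section

/-- The Lie algebra of `2 × 2` complex matrices (ambient algebra of `𝔰𝔩₂(ℂ)`). -/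
abbrev M2 : Type := Matrix (Fin 2) (Fin 2) ℂ

/-- `h = e₁₁ - e₂₂`. -/
def hM : M2 := Matrix.single 0 0 1 - Matrix.single 1 1 1

/-- `e = e₁₂`. -/
def eM : M2 := Matrix.single 0 1 1

/-- `f = e₂₁`. -/
def fM : M2 := Matrix.single 1 0 1

/-- Cherednik's trigonometric solution
`ρ(z) = (cos z/(2 sin z))·h⊗h + (1/sin z)·(e⊗f + f⊗e) + (sin z)·f⊗f` for `𝔰𝔩₂(ℂ)`. -/
def ρCherednik (z : ℂ) : M2 ⊗[ℂ] M2 :=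
  (Complex.cos z / (2 * Complex.sin z)) • (hM ⊗ₜ[ℂ] hM)
    + (Complex.sin z)⁻¹ • (eM ⊗ₜ[ℂ] fM + fM ⊗ₜ[ℂ] eM)
    + Complex.sin z • (fM ⊗ₜ[ℂ] fM)

lemma lie_he' : ⁅hM, eM⁆ = (2:ℂ) • eM := by
  ext i j
  fin_cases i <;> fin_cases j <;>
    simp [hM, eM, Ring.lie_def, Matrix.mul_apply, Fin.sum_univ_two, Matrix.single] <;>
    norm_num

lemma lie_hf' : ⁅hM, fM⁆ = (-2:ℂ) • fM := by
  ext i j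
  fin_cases i <;> fin_cases j <;>
    simp [hM, fM, Ring.lie_def, Matrix.mul_apply, Fin.sum_univ_two, Matrix.single] <;>
    norm_num

lemma lie_ef' : ⁅eM, fM⁆ = hM := by
  ext i j
  fin_cases i <;> fin_cases j <;>
    simp [hM, eM, fM, Ring.lie_def, Matrix.mul_apply, Fin.sum_univ_two, Matrix.single]

lemma lie_eh' : ⁅eM, hM⁆ = (-2:ℂ) • eM := by
  ext i j
  fin_cases i <;> fin_cases j <;>
    simp [hM, eM, Ring.lie_def, Matrix.mul_apply, Fin.sum_univ_two, Matrix.single] <;>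
    norm_num
lemma lie_fh' : ⁅fM, hM⁆ = (2:ℂ) • fM := by
  ext i j
  fin_cases i <;> fin_cases j <;>
    simp [hM, fM, Ring.lie_def, Matrix.mul_apply, Fin.sum_univ_two, Matrix.single] <;>
    norm_num
lemma lie_fe' : ⁅fM, eM⁆ = (-1:ℂ) • hM := by
  ext i j
  fin_cases i <;> fin_cases j <;>
    simp [hM, eM, fM, Ring.lie_def, Matrix.mul_apply, Fin.sum_univ_two, Matrix.single] <;>
    norm_num

lemma lie_self' (a : M2) : ⁅a, a⁆ = 0 := by rw [Ring.lie_def, sub_self]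

set_option maxHeartbeats 2000000 in
/-- Cherednik's trigonometric solution satisfies the classical
Yang–Baxter equation with one spectral parameter. -/
theorem statement17
    (B1213 B1223 B1323 :
      (M2 ⊗[ℂ] M2) →ₗ[ℂ] (M2 ⊗[ℂ] M2) →ₗ[ℂ] (M2 ⊗[ℂ] (M2 ⊗[ℂ] M2)))
    (hB1213 : ∀ a b c d : M2,
      B1213 (a ⊗ₜ[ℂ] b) (c ⊗ₜ[ℂ] d) = ⁅a, c⁆ ⊗ₜ[ℂ] (b ⊗ₜ[ℂ] d))
    (hB1223 : ∀ a b c d : M2,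
      B1223 (a ⊗ₜ[ℂ] b) (c ⊗ₜ[ℂ] d) = a ⊗ₜ[ℂ] (⁅b, c⁆ ⊗ₜ[ℂ] d))
    (hB1323 : ∀ a b c d : M2,
      B1323 (a ⊗ₜ[ℂ] b) (c ⊗ₜ[ℂ] d) = a ⊗ₜ[ℂ] (c ⊗ₜ[ℂ] ⁅b, d⁆))
    :
    ∀ x y : ℂ, Complex.sin x ≠ 0 → Complex.sin y ≠ 0 → Complex.sin (x + y) ≠ 0 →
      B1213 (ρCherednik x) (ρCherednik (x + y)) + B1323 (ρCherednik (x + y)) (ρCherednik y)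
        + B1223 (ρCherednik x) (ρCherednik y) = 0 := by
  intro x y hx hy hxy
  have Hx := Complex.sin_sq_add_cos_sq x
  have Hy := Complex.sin_sq_add_cos_sq y
  set sx := Complex.sin x
  set cx := Complex.cos x
  set sy := Complex.sin y
  set cy := Complex.cos y
  simp only [ρCherednik, map_add, _root_.map_smul, LinearMap.add_apply, LinearMap.smul_apply,
    hB1213, hB1223, hB1323, lie_he', lie_hf', lie_ef', lie_eh', lie_fh', lie_fe', lie_self',
    smul_lie, lie_smul, TensorProduct.smul_tmul, TensorProduct.tmul_smul,
    TensorProduct.zero_tmul, TensorProduct.tmul_zero, smul_zero, smul_smul]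
  rw [Complex.sin_add, Complex.cos_add] at *
  have hx' : Complex.sin x ≠ 0 := hx
  have hy' : Complex.sin y ≠ 0 := hy
  have hxy' : Complex.cos y * Complex.sin x + Complex.cos x * Complex.sin y ≠ 0 := by
    rwa [mul_comm] at hxy
  match_scalars
  all_goals field_simp
  all_goals grind

end
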